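/- Let k, m be positive natural numbers, let A, B, C, D be time-dependent coefficient matrices as in the linear base and auxiliary system, and let G₀ ∈ Matrix (Fin m) (Fin k) ℂ be given initial data. Suppose Q : ℝ → Matrix (Fin k) (Fin k) ℂ and P : ℝ → Matrix (Fin m) (Fin k) ℂ satisfy, for every t ≥ 0, HasDerivAt Q (A t * Q t + B t * P t) t and HasDerivAt P (C t * Q t + D t * P t) t, with initial data Q 0 = 1 (the identity matrix) and P 0 = G₀. Then there exists T > 0 such that Q t is invertible for every t ∈ [0, T), and the function G : t ↦ P t * (Q t)⁻¹ satisfies G 0 = G₀ and, for every t ∈ [0, T), HasDerivAt G (C t + D t * G t - G t * (A t + B t * G t)) t. -/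

import Mathlib

attribute [local instance] Matrix.frobeniusNormedAddCommGroup Matrix.frobeniusNormedSpace

attribute [local instance] Matrix.frobeniusNormedRing Matrix.frobeniusNormedAlgebra

open Matrix

/-- Multiplication of rectangular matrices as a continuous bilinear map. -/
noncomputable def matMulCLM (k m : ℕ) :
    Matrix (Fin m) (Fin k) ℂ →L[ℝ] Matrix (Fin k) (Fin k) ℂ →L[ℝ] Matrix (Fin m) (Fin k) ℂ :=
  LinearMap.mkContinuous₂
    (LinearMap.mk₂ ℝ (· * ·) Matrix.add_mul (fun c A B => Matrix.smul_mul c A B)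
      Matrix.mul_add (fun c A B => Matrix.mul_smul A c B)) 1
    (fun x y => by simpa using Matrix.frobenius_norm_mul x y)

theorem hasDerivAt_matmul {k m : ℕ} {f : ℝ → Matrix (Fin m) (Fin k) ℂ}
    {g : ℝ → Matrix (Fin k) (Fin k) ℂ} {f' g'} {t : ℝ}
    (hf : HasDerivAt f f' t) (hg : HasDerivAt g g' t) :
    HasDerivAt (fun s => f s * g s) (f' * g t + f t * g') t := by
  have := ((matMulCLM k m).hasFDerivAt_of_bilinear hf.hasFDerivAt hg.hasFDerivAt).hasDerivAt
  refine this.congr_deriv ?_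
  change (matMulCLM k m) (f t) ((1:ℝ) • g') + (matMulCLM k m) ((1:ℝ) • f') (g t) = _
  rw [one_smul, one_smul, add_comm]; rfl

set_option maxHeartbeats 1000000 in
theorem hasDerivAt_matinv {k : ℕ} {g : ℝ → Matrix (Fin k) (Fin k) ℂ} {g'} {t : ℝ}
    (hg : HasDerivAt g g' t) (hu : IsUnit (g t)) :
    HasDerivAt (fun s => (g s)⁻¹) (-((g t)⁻¹ * g' * (g t)⁻¹)) t := by
  obtain ⟨u, hu'⟩ := hu
  have h1 : HasFDerivAt Ring.inverse
      (-(ContinuousLinearMap.mulLeftRight ℂ _ ↑u⁻¹ ↑u⁻¹)) (g t) := hu' ▸ hasFDerivAt_ringInverse u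
  have h2 := (h1.restrictScalars ℝ).comp_hasDerivAt t hg
  have h3 : (fun s => (g s)⁻¹) = fun s => Ring.inverse (g s) := by
    funext s; exact Matrix.nonsing_inv_eq_ringInverse _
  rw [h3]
  convert h2 using 1 <;> try rfl
  have : (↑u⁻¹ : Matrix (Fin k) (Fin k) ℂ) = (g t)⁻¹ := by
    rw [← hu', ← Matrix.coe_units_inv]
  simp [this, Matrix.mul_assoc]

/-- Given a solution of the linear base and auxiliary matrix system
`∂ₜQ = AQ + BP`, `∂ₜP = CQ + DP` with data `Q 0 = 1`, `P 0 = G₀`, there is a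
time `T > 0` on which `Q t` is invertible and `G = P Q⁻¹` solves the matrix
Riccati equation `∂ₜG = C + DG − G(A + BG)` with `G 0 = G₀`. -/
theorem matrix_riccati_solution_from_linear_data
    (k m : ℕ) (hk : 0 < k) (hm : 0 < m)
    (A : ℝ → Matrix (Fin k) (Fin k) ℂ) (B : ℝ → Matrix (Fin k) (Fin m) ℂ)
    (C : ℝ → Matrix (Fin m) (Fin k) ℂ) (D : ℝ → Matrix (Fin m) (Fin m) ℂ)
    (G₀ : Matrix (Fin m) (Fin k) ℂ)
    (Q : ℝ → Matrix (Fin k) (Fin k) ℂ) (P : ℝ → Matrix (Fin m) (Fin k) ℂ)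
    (hQ : ∀ t : ℝ, 0 ≤ t → HasDerivAt Q (A t * Q t + B t * P t) t)
    (hP : ∀ t : ℝ, 0 ≤ t → HasDerivAt P (C t * Q t + D t * P t) t)
    (hQ0 : Q 0 = 1) (hP0 : P 0 = G₀) :
    ∃ T : ℝ, 0 < T ∧
      (∀ t ∈ Set.Ico (0 : ℝ) T, IsUnit (Q t)) ∧
      P 0 * (Q 0)⁻¹ = G₀ ∧
      ∀ t ∈ Set.Ico (0 : ℝ) T,
        HasDerivAt (fun s => P s * (Q s)⁻¹)
          (C t + D t * (P t * (Q t)⁻¹)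
            - (P t * (Q t)⁻¹) * (A t + B t * (P t * (Q t)⁻¹))) t := by
  -- continuity of `det ∘ Q` at 0
  have hcont : ContinuousAt (fun s => (Q s).det) 0 :=
    ((continuous_id.matrix_det).continuousAt).comp (hQ 0 le_rfl).continuousAt
  have hdet0 : (Q 0).det = 1 := by rw [hQ0, Matrix.det_one]
  have hne : ∀ᶠ s in nhds (0 : ℝ), (Q s).det ≠ 0 := by
    have : ∀ᶠ s in nhds (0 : ℝ), (Q s).det ∈ {z : ℂ | z ≠ 0} := by
      refine hcont.eventually_mem ?_
      rw [hdet0]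
      exact (isOpen_compl_singleton).mem_nhds (by simp)
    exact this
  obtain ⟨T, hT, hball⟩ := Metric.eventually_nhds_iff_ball.mp hne
  have hunit : ∀ t ∈ Set.Ico (0 : ℝ) T, IsUnit (Q t) := by
    intro t ht
    have : t ∈ Metric.ball (0 : ℝ) T := by
      rw [Metric.mem_ball, Real.dist_eq, sub_zero, abs_of_nonneg ht.1]
      exact ht.2
    exact (Matrix.isUnit_iff_isUnit_det _).mpr (isUnit_iff_ne_zero.mpr (hball t this))
  refine ⟨T, hT, hunit, by rw [hQ0, hP0, inv_one, Matrix.mul_one], ?_⟩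
  intro t ht
  have hu := hunit t ht
  have hdet : IsUnit (Q t).det := (Matrix.isUnit_iff_isUnit_det _).mp hu
  have hQQ : Q t * (Q t)⁻¹ = 1 := Matrix.mul_nonsing_inv _ hdet
  have hQ' := hQ t ht.1
  have hP' := hP t ht.1
  have hinv := hasDerivAt_matinv hQ' hu
  have hprod := hasDerivAt_matmul hP' hinv
  convert hprod using 1
  simp only [Matrix.mul_neg, Matrix.neg_mul, Matrix.add_mul, Matrix.mul_add,
    Matrix.mul_assoc, hQQ, Matrix.mul_one]
  abel
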